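/- For every k ∈ ℕ and reals ε, δ > 0 with ε ≤ 1, there exists n ∈ ℕ such that for every finite set I with |I| > n there is a partition 2^I = a⁰ ∪ a¹ such that: (1) for every nonempty X ⊆ 2^I with |X| ≤ k, | |⋂_{x∈X}(a⁰+x)|/2^{|I|} − 2^{-|X|} | < δ; and (2) for every U ⊆ 2^I with |U|/2^{|I|} = a ≥ ε, there is a set T ⊆ 2^I with |T|/2^{|I|} > 1 − δ such that for every s ∈ T, | |(a⁰+s) ∩ U|/2^{|I|} − a/2 | < δ. -/

import Mathlib

open scoped Classical

open Finset
open scoped Pointwise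
set_option linter.unusedSectionVars false
set_option maxHeartbeats 1000000

set_option maxHeartbeats 1000000

noncomputable def sgn (b : ZMod 2) : ℝ := if b = 0 then 1 else -1
lemma zmod2_cases (b : ZMod 2) : b = 0 ∨ b = 1 := by revert b; decide
lemma sum_sgn_pow (c : ℕ) : ∑ b : ZMod 2, sgn b ^ c = 1 + (-1 : ℝ) ^ c := by
  rw [show (univ : Finset (ZMod 2)) = {0, 1} from rfl, Finset.sum_pair (by decide)]
  simp [sgn]

section
variable {I : Type} [Fintype I] [DecidableEq I]

lemma char2 (v : I → ZMod 2) : v + v = 0 := by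
  funext i; show v i + v i = 0
  rcases zmod2_cases (v i) with h | h <;> rw [h] <;> decide

lemma char2_cancel {a b : I → ZMod 2} : a + (a + b) = b := by
  rw [← add_assoc, char2, zero_add]

lemma prod_translate (S : Finset (I → ZMod 2)) (g : (I → ZMod 2) → ℝ) (t : I → ZMod 2) :
    ∏ x ∈ S, g (t + x) = ∏ v : I → ZMod 2, (if t + v ∈ S then g v else 1) := by
  rw [← Finset.prod_filter]
  have himg : univ.filter (fun v => t + v ∈ S) = S.image (fun x => t + x) := by
    ext v
    simp only [mem_filter, mem_univ, true_and, mem_image]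
    constructor
    · intro hv; exact ⟨t + v, hv, char2_cancel⟩
    · rintro ⟨x, hx, rfl⟩; rwa [char2_cancel]
  rw [himg, Finset.prod_image (fun a _ b _ hab => by
    have := congrArg (fun z => t + z) hab; simpa [char2_cancel] using this)]

noncomputable def Bsum (S : Finset (I → ZMod 2)) (h : (I → ZMod 2) → ZMod 2) : ℝ :=
  ∑ t : I → ZMod 2, ∏ x ∈ S, sgn (h (t + x))

/-- multiplicity of `v` in the union of translates -/
noncomputable def cnt (S : Finset (I → ZMod 2)) {n : ℕ} (p : Fin n → I → ZMod 2)
    (v : I → ZMod 2) : ℕ := #(univ.filter fun i => p i + v ∈ S)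

noncomputable def goodT (S : Finset (I → ZMod 2)) (n : ℕ) : Finset (Fin n → I → ZMod 2) :=
  univ.filter fun p => ∀ v : I → ZMod 2, Even (cnt S p v)

lemma moment_eq (S : Finset (I → ZMod 2)) (n : ℕ) :
    ∑ h : (I → ZMod 2) → ZMod 2, (Bsum S h) ^ n
      = (#(goodT S n) : ℝ) * 2 ^ (Fintype.card (I → ZMod 2)) := by
  have step1 : ∀ h : (I → ZMod 2) → ZMod 2, (Bsum S h) ^ n
      = ∑ p ∈ Fintype.piFinset (fun _ : Fin n => (univ : Finset (I → ZMod 2))),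
          ∏ v : I → ZMod 2, sgn (h v) ^ (cnt S p v) := by
    intro h
    rw [Bsum, Finset.sum_pow']
    refine Finset.sum_congr rfl fun p _ => ?_
    calc ∏ i : Fin n, ∏ x ∈ S, sgn (h (p i + x))
        = ∏ i : Fin n, ∏ v : I → ZMod 2, (if p i + v ∈ S then sgn (h v) else 1) := by
          refine Finset.prod_congr rfl fun i _ => prod_translate S (fun v => sgn (h v)) (p i)
      _ = ∏ v : I → ZMod 2, ∏ i : Fin n, (if p i + v ∈ S then sgn (h v) else 1) :=
          Finset.prod_comm
      _ = ∏ v : I → ZMod 2, sgn (h v) ^ (cnt S p v) := by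
          refine Finset.prod_congr rfl fun v _ => ?_
          rw [Finset.prod_ite (fun _ => sgn (h v)) (fun _ => (1:ℝ)),
            Finset.prod_const, Finset.prod_const_one, mul_one, cnt]
  calc ∑ h : (I → ZMod 2) → ZMod 2, (Bsum S h) ^ n
      = ∑ h : (I → ZMod 2) → ZMod 2,
          ∑ p ∈ Fintype.piFinset (fun _ : Fin n => (univ : Finset (I → ZMod 2))),
          ∏ v : I → ZMod 2, sgn (h v) ^ (cnt S p v) := by
        exact Finset.sum_congr rfl fun h _ => step1 h
    _ = ∑ p ∈ Fintype.piFinset (fun _ : Fin n => (univ : Finset (I → ZMod 2))),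
          ∑ h : (I → ZMod 2) → ZMod 2,
          ∏ v : I → ZMod 2, sgn (h v) ^ (cnt S p v) := Finset.sum_comm
    _ = ∑ p ∈ Fintype.piFinset (fun _ : Fin n => (univ : Finset (I → ZMod 2))),
          ∏ v : I → ZMod 2, (1 + (-1 : ℝ) ^ (cnt S p v)) := by
        refine Finset.sum_congr rfl fun p _ => ?_
        have := Finset.sum_prod_piFinset (univ : Finset (ZMod 2))
          (fun (v : I → ZMod 2) (b : ZMod 2) => sgn b ^ cnt S p v)
        rw [Fintype.piFinset_univ] at this
        rw [this]
        exact Finset.prod_congr rfl fun v _ => sum_sgn_pow _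
    _ = (#(goodT S n) : ℝ) * 2 ^ (Fintype.card (I → ZMod 2)) := by
        rw [Fintype.piFinset_univ]
        rw [← Finset.sum_filter_add_sum_filter_not univ
          (fun p => ∀ v : I → ZMod 2, Even (cnt S p v))]
        have h1 : ∀ p ∈ univ.filter (fun p : Fin n → I → ZMod 2 =>
            ∀ v : I → ZMod 2, Even (cnt S p v)),
            ∏ v : I → ZMod 2, (1 + (-1 : ℝ) ^ (cnt S p v)) = 2 ^ (Fintype.card (I → ZMod 2)) := by
          intro p hp
          rw [mem_filter] at hp
          have : ∀ v : I → ZMod 2, (1 + (-1 : ℝ) ^ (cnt S p v)) = 2 := by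
            intro v; rw [(hp.2 v).neg_one_pow]; norm_num
          rw [Finset.prod_congr rfl (fun v _ => this v), Finset.prod_const, card_univ]
        have h2 : ∀ p ∈ univ.filter (fun p : Fin n → I → ZMod 2 =>
            ¬ ∀ v : I → ZMod 2, Even (cnt S p v)),
            ∏ v : I → ZMod 2, (1 + (-1 : ℝ) ^ (cnt S p v)) = 0 := by
          intro p hp
          rw [mem_filter] at hp
          obtain ⟨v, hv⟩ := not_forall.mp hp.2
          refine Finset.prod_eq_zero (mem_univ v) ?_
          rw [(Nat.not_even_iff_odd.mp hv).neg_one_pow]; norm_num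
        rw [Finset.sum_congr rfl h1, Finset.sum_congr rfl h2, Finset.sum_const,
          Finset.sum_const_zero, add_zero, goodT, nsmul_eq_mul]
end

-- ## Counting good tuples

variable {I : Type} [Fintype I] [DecidableEq I]

local notation "V" => (I → ZMod 2)

lemma good_linked {S : Finset V} (hS : S.Nonempty) {n : ℕ} {p : Fin n → V}
    (hp : p ∈ goodT S n) (i : Fin n) : ∃ j, j ≠ i ∧ p i + p j ∈ S + S := by
  obtain ⟨x₀, hx₀⟩ := hS
  rw [goodT, mem_filter] at hp
  have hv := hp.2 (p i + x₀)
  have hi : i ∈ univ.filter fun j => p j + (p i + x₀) ∈ S := by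
    rw [mem_filter]
    exact ⟨mem_univ _, by rwa [char2_cancel]⟩
  have hcard : 1 < cnt S p (p i + x₀) := by
    have h1 : 1 ≤ cnt S p (p i + x₀) := Finset.card_pos.mpr ⟨i, hi⟩
    rcases hv with ⟨m, hm⟩
    rw [cnt] at *
    omega
  obtain ⟨j, hj, hji⟩ := Finset.exists_mem_ne hcard i
  rw [mem_filter] at hj
  refine ⟨j, hji, ?_⟩
  have hy : p j + (p i + x₀) ∈ S := hj.2
  have heq : p i + p j = x₀ + (p j + (p i + x₀)) := by
    rw [show x₀ + (p j + (p i + x₀)) = (p i + p j) + (x₀ + x₀) by abel, char2, add_zero]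
  rw [heq, Finset.mem_add]
  exact ⟨x₀, hx₀, p j + (p i + x₀), hy, rfl⟩

lemma zero_mem_SS {S : Finset V} (hS : S.Nonempty) : (0 : V) ∈ S + S := by
  obtain ⟨x₀, hx₀⟩ := hS
  rw [Finset.mem_add]
  exact ⟨x₀, hx₀, x₀, hx₀, char2 x₀⟩

lemma SS_subset_W {S : Finset V} (hS : S.Nonempty) : S + S ⊆ (S + S) + (S + S) := by
  intro a ha
  rw [Finset.mem_add]
  exact ⟨a, ha, 0, zero_mem_SS hS, add_zero a⟩

/-- the set of "fresh" indices -/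
noncomputable def freshS (S : Finset V) {n : ℕ} (p : Fin n → V) : Finset (Fin n) :=
  univ.filter fun i => ∀ j, j < i → p i + p j ∉ (S + S) + (S + S)

lemma fresh_card_le {S : Finset V} (hS : S.Nonempty) {q : ℕ} {p : Fin (2*q) → V}
    (hp : p ∈ goodT S (2*q)) : #(freshS S p) ≤ q := by
  have hw : ∀ i ∈ freshS S p, ∃ j, i < j ∧ p i + p j ∈ S + S := by
    intro i hi
    obtain ⟨j, hji, hmem⟩ := good_linked hS hp i
    rcases lt_or_gt_of_ne hji with h | h
    · exfalso
      simp only [freshS, mem_filter, mem_univ, true_and] at hi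
      exact hi j h (SS_subset_W hS hmem)
    · exact ⟨j, h, hmem⟩
  set w : Fin (2*q) → Fin (2*q) := fun i =>
    if h : ∃ j, i < j ∧ p i + p j ∈ S + S then h.choose else i with hwdef
  have hspec : ∀ i ∈ freshS S p, i < w i ∧ p i + p (w i) ∈ S + S := by
    intro i hi
    have h := hw i hi
    rw [hwdef]; simp only [dif_pos h]
    exact h.choose_spec
  have hmaps : ∀ i ∈ freshS S p, w i ∈ univ \ freshS S p := by
    intro i hi
    obtain ⟨hlt, hmem⟩ := hspec i hi
    rw [mem_sdiff]
    refine ⟨mem_univ _, ?_⟩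
    simp only [freshS, mem_filter, mem_univ, true_and]
    push_neg
    refine ⟨i, hlt, ?_⟩
    rw [add_comm (p (w i)) (p i)]
    exact SS_subset_W hS hmem
  have hinj : Set.InjOn w (freshS S p) := by
    intro i hi i' hi' heq
    by_contra hne
    have key : ∀ a b : Fin (2*q), a ∈ freshS S p → b ∈ freshS S p → a < b → w a = w b → False := by
      intro a b ha hb hab hw
      obtain ⟨hlt1, hm1⟩ := hspec a ha
      obtain ⟨hlt2, hm2⟩ := hspec b hb
      simp only [freshS, mem_filter, mem_univ, true_and] at hb
      apply hb a hab
      have heq2 : p b + p a = (p b + p (w b)) + (p a + p (w a)) := by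
        rw [hw, show (p b + p (w b)) + (p a + p (w b)) = (p b + p a) + (p (w b) + p (w b)) by abel,
          char2, add_zero]
      rw [heq2, Finset.mem_add]
      exact ⟨_, hm2, _, hm1, rfl⟩
    rcases lt_or_gt_of_ne (show i ≠ i' from hne) with h | h
    · exact key i i' hi hi' h heq
    · exact key i' i hi' hi h heq.symm
  have hcard := Finset.card_le_card_of_injOn w hmaps hinj
  rw [Finset.card_sdiff_of_subset (subset_univ _), card_univ] at hcard
  simp only [Fintype.card_fin] at hcard
  omega

lemma zero_mem_W {S : Finset V} (hS : S.Nonempty) : (0 : V) ∈ (S + S) + (S + S) :=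
  SS_subset_W hS (zero_mem_SS hS)

lemma goodT_card_le {S : Finset V} (hS : S.Nonempty) (q : ℕ) :
    #(goodT S (2*q)) ≤ 2^(2*q) * (Fintype.card V)^q * (#((S+S)+(S+S)))^(2*q) * ((2*q)^(2*q)) := by
  set n := 2*q with hn
  set W := (S+S)+(S+S) with hWdef
  set T := (univ.filter fun A : Finset (Fin n) => #A ≤ q).sigma
      (fun A => (Fintype.piFinset fun i => if i ∈ A then (univ : Finset V) else W)
        ×ˢ (univ : Finset (Fin n → Fin n))) with hT
  have hwitex : ∀ (p : Fin n → V) (i : Fin n), i ∉ freshS S p → ∃ j, j < i ∧ p i + p j ∈ W := by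
    intro p i hi
    simp only [freshS, mem_filter, mem_univ, true_and] at hi
    push_neg at hi
    exact hi
  set wit : (Fin n → V) → Fin n → Fin n := fun p i =>
    if h : ∃ j, j < i ∧ p i + p j ∈ W then h.choose else i with hwitdef
  have hwit : ∀ (p : Fin n → V) (i : Fin n), i ∉ freshS S p →
      (wit p i < i ∧ p i + p (wit p i) ∈ W) := by
    intro p i hi
    have h := hwitex p i hi
    rw [hwitdef]; simp only [dif_pos h]
    exact h.choose_spec
  set Φ : (Fin n → V) → Σ _ : Finset (Fin n), ((Fin n → V) × (Fin n → Fin n)) := fun p =>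
    ⟨freshS S p, (fun i => if i ∈ freshS S p then p i else p i + p (wit p i), wit p)⟩ with hΦ
  have hmaps : ∀ p ∈ goodT S n, Φ p ∈ T := by
    intro p hp
    rw [hT, Finset.mem_sigma]
    constructor
    · rw [mem_filter]
      exact ⟨mem_univ _, fresh_card_le hS hp⟩
    · rw [Finset.mem_product]
      refine ⟨?_, mem_univ _⟩
      rw [Fintype.mem_piFinset]
      intro i
      by_cases hi : i ∈ freshS S p
      · simp [hΦ, hi]
      · simp only [hΦ, hi, if_neg, if_false, ↓reduceIte]
        exact (hwit p i hi).2
  have hinj : Set.InjOn Φ (goodT S n) := by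
    intro p hp p' hp' heq
    rw [hΦ] at heq
    have hA : freshS S p = freshS S p' := congrArg Sigma.fst heq
    have hsnd : (fun i => if i ∈ freshS S p then p i else p i + p (wit p i), wit p)
        = (fun i => if i ∈ freshS S p' then p' i else p' i + p' (wit p' i), wit p') := by
      have := (Sigma.mk.inj_iff.mp heq).2
      exact eq_of_heq this
    have hf := congrArg Prod.fst hsnd
    have hg := congrArg Prod.snd hsnd
    have main : ∀ m : ℕ, ∀ i : Fin n, i.val < m → p i = p' i := by
      intro m
      induction m with
      | zero => intro i hi; omega
      | succ m IH =>
        intro i hi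
        by_cases hfr : i ∈ freshS S p
        · have hfr' : i ∈ freshS S p' := hA ▸ hfr
          have := congrFun hf i
          simpa [hfr, hfr'] using this
        · have hfr' : i ∉ freshS S p' := hA ▸ hfr
          obtain ⟨hlt, _⟩ := hwit p i hfr
          obtain ⟨hlt', _⟩ := hwit p' i hfr'
          have hgi : wit p i = wit p' i := congrFun hg i
          have hj : p (wit p i) = p' (wit p i) := by
            apply IH
            have : (wit p i).val < i.val := hlt
            omega
          have hfi := congrFun hf i
          simp only [hfr, hfr', if_neg, if_false] at hfi
          -- hfi : p i + p (wit p i) = p' i + p' (wit p' i)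
          have : p i = (p i + p (wit p i)) + p (wit p i) := by
            rw [show (p i + p (wit p i)) + p (wit p i) = p i + (p (wit p i) + p (wit p i)) by abel,
              char2, add_zero]
          rw [this, hfi, ← hgi, ← hj]
          rw [show p' i + p (wit p i) + p (wit p i)
              = p' i + (p (wit p i) + p (wit p i)) by abel, char2, add_zero]
    exact funext fun i => main (i.val + 1) i (Nat.lt_succ_self _)
  have hcard1 : #(goodT S n) ≤ #T := Finset.card_le_card_of_injOn Φ hmaps hinj
  have hNpos : 1 ≤ Fintype.card V := Fintype.card_pos
  have hWpos : 1 ≤ #W := Finset.card_pos.mpr ⟨0, zero_mem_W hS⟩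
  have hcard2 : #T ≤ 2^n * ((Fintype.card V)^q * ((#W)^n * n^n)) := by
    rw [hT, Finset.card_sigma]
    have hbound : ∀ A ∈ univ.filter fun A : Finset (Fin n) => #A ≤ q,
        #((Fintype.piFinset fun i => if i ∈ A then (univ : Finset V) else W)
          ×ˢ (univ : Finset (Fin n → Fin n)))
        ≤ (Fintype.card V)^q * ((#W)^n * n^n) := by
      intro A hA
      rw [mem_filter] at hA
      rw [Finset.card_product, Fintype.card_piFinset]
      have h1 : ∏ i : Fin n, #(if i ∈ A then (univ : Finset V) else W)
          = (Fintype.card V)^(#A) * (#W)^(n - #A) := by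
        have : ∀ i : Fin n, #(if i ∈ A then (univ : Finset V) else W)
            = if i ∈ A then Fintype.card V else #W := by
          intro i; split <;> simp
        rw [Finset.prod_congr rfl (fun i _ => this i), Finset.prod_ite, Finset.prod_const,
          Finset.prod_const, Finset.filter_univ_mem]
        congr 2
        have : univ.filter (fun i : Fin n => ¬ i ∈ A) = univ \ A := by
          ext i; simp
        rw [this, Finset.card_sdiff_of_subset (subset_univ _), card_univ, Fintype.card_fin]
      rw [h1]
      have h2 : #(univ : Finset (Fin n → Fin n)) = n^n := by
        rw [card_univ, Fintype.card_fun, Fintype.card_fin]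
      rw [h2]
      have h3 : (Fintype.card V)^(#A) ≤ (Fintype.card V)^q :=
        Nat.pow_le_pow_right hNpos hA.2
      have h4 : (#W)^(n - #A) ≤ (#W)^n := Nat.pow_le_pow_right hWpos (Nat.sub_le _ _)
      calc (Fintype.card V)^(#A) * (#W)^(n - #A) * n^n
          ≤ (Fintype.card V)^q * (#W)^n * n^n :=
            Nat.mul_le_mul (Nat.mul_le_mul h3 h4) (le_refl _)
        _ = (Fintype.card V)^q * ((#W)^n * n^n) := by ring
    calc ∑ A ∈ univ.filter (fun A : Finset (Fin n) => #A ≤ q),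
          #((Fintype.piFinset fun i => if i ∈ A then (univ : Finset V) else W)
            ×ˢ (univ : Finset (Fin n → Fin n)))
        ≤ ∑ _A ∈ univ.filter (fun A : Finset (Fin n) => #A ≤ q),
            (Fintype.card V)^q * ((#W)^n * n^n) := Finset.sum_le_sum hbound
      _ = #(univ.filter (fun A : Finset (Fin n) => #A ≤ q))
            * ((Fintype.card V)^q * ((#W)^n * n^n)) := by rw [Finset.sum_const, smul_eq_mul]
      _ ≤ 2^n * ((Fintype.card V)^q * ((#W)^n * n^n)) := by
          refine Nat.mul_le_mul ?_ (le_refl _)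
          calc #(univ.filter (fun A : Finset (Fin n) => #A ≤ q)) ≤ #(univ : Finset (Finset (Fin n))) :=
                Finset.card_filter_le _ _
            _ = 2^n := by rw [card_univ, Fintype.card_finset, Fintype.card_fin]
  calc #(goodT S n) ≤ #T := hcard1
    _ ≤ 2^n * ((Fintype.card V)^q * ((#W)^n * n^n)) := hcard2
    _ = 2^(2*q) * (Fintype.card V)^q * (#W)^(2*q) * ((2*q)^(2*q)) := by rw [← hn]; ring

lemma exists_uniform (K q : ℕ) (δ₁ : ℝ) (hδ₁ : 0 < δ₁)
    (hbig : ((K:ℝ)+1) * ((2:ℝ)^(2*q) * ((K:ℝ)^4)^(2*q) * ((2*q : ℕ):ℝ)^(2*q))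
        * ((Fintype.card V : ℝ))^(K+q)
      < δ₁^(2*q) * ((Fintype.card V : ℝ))^(2*q)) :
    ∃ h : V → ZMod 2, ∀ S : Finset V, S.Nonempty → #S ≤ K →
      |Bsum S h| < δ₁ * (Fintype.card V : ℝ) := by
  set N := Fintype.card V with hN
  have hN1 : 1 ≤ N := Fintype.card_pos
  set Nr : ℝ := (N : ℝ) with hNr
  have hNr1 : (1:ℝ) ≤ Nr := by rw [hNr]; exact_mod_cast hN1
  have hNr0 : (0:ℝ) < Nr := lt_of_lt_of_le one_pos hNr1
  set C : ℕ := 2^(2*q) * (K^4)^(2*q) * ((2*q)^(2*q)) with hC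
  set bad : Finset (V → ZMod 2) :=
    univ.filter (fun h => ∃ S : Finset V, S.Nonempty ∧ #S ≤ K ∧ δ₁ * Nr ≤ |Bsum S h|) with hbad
  set SS : Finset (Finset V) := univ.filter (fun S : Finset V => S.Nonempty ∧ #S ≤ K) with hSS
  set badS : Finset V → Finset (V → ZMod 2) :=
    fun S => univ.filter (fun h => δ₁ * Nr ≤ |Bsum S h|) with hbadS
  -- per-S bound
  have key1 : ∀ S ∈ SS, (#(badS S) : ℝ) * (δ₁ * Nr)^(2*q) ≤ (C:ℝ) * Nr^q * 2^N := by
    intro S hSmem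
    rw [hSS, mem_filter] at hSmem
    obtain ⟨-, hSne, hSK⟩ := hSmem
    have step1 : (#(badS S) : ℝ) * (δ₁ * Nr)^(2*q) ≤ ∑ h ∈ badS S, (Bsum S h)^(2*q) := by
      have heq0 : (#(badS S) : ℝ) * (δ₁ * Nr)^(2*q) = ∑ _h ∈ badS S, (δ₁ * Nr)^(2*q) := by
        rw [Finset.sum_const, nsmul_eq_mul]
      rw [heq0]
      refine Finset.sum_le_sum ?_
      intro h hh
      rw [hbadS, mem_filter] at hh
      have h1 : (δ₁ * Nr)^(2*q) ≤ |Bsum S h|^(2*q) :=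
        pow_le_pow_left₀ (by positivity) hh.2 _
      calc (δ₁ * Nr)^(2*q) ≤ |Bsum S h|^(2*q) := h1
        _ = |(Bsum S h)^(2*q)| := by rw [abs_pow]
        _ = (Bsum S h)^(2*q) := abs_of_nonneg ((even_two_mul q).pow_nonneg _)
    have step2 : ∑ h ∈ badS S, (Bsum S h)^(2*q) ≤ ∑ h : V → ZMod 2, (Bsum S h)^(2*q) :=
      Finset.sum_le_sum_of_subset_of_nonneg (subset_univ _)
        (fun h _ _ => (even_two_mul q).pow_nonneg _)
    have step3 : ∑ h : V → ZMod 2, (Bsum S h)^(2*q) = (#(goodT S (2*q)) : ℝ) * 2^N :=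
      moment_eq S (2*q)
    have step4 : (#(goodT S (2*q)) : ℝ) ≤ (C:ℝ) * Nr^q := by
      have hWK : #((S+S)+(S+S)) ≤ K^4 := by
        calc #((S+S)+(S+S)) ≤ #(S+S) * #(S+S) := Finset.card_add_le
          _ ≤ (#S * #S) * (#S * #S) := Nat.mul_le_mul Finset.card_add_le Finset.card_add_le
          _ ≤ (K * K) * (K * K) := by
              exact Nat.mul_le_mul (Nat.mul_le_mul hSK hSK) (Nat.mul_le_mul hSK hSK)
          _ = K^4 := by ring
      have hnat : #(goodT S (2*q)) ≤ C * N^q := by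
        calc #(goodT S (2*q)) ≤ 2^(2*q) * N^q * (#((S+S)+(S+S)))^(2*q) * ((2*q)^(2*q)) :=
              goodT_card_le hSne q
          _ ≤ 2^(2*q) * N^q * (K^4)^(2*q) * ((2*q)^(2*q)) := by
              exact Nat.mul_le_mul (Nat.mul_le_mul (le_refl _)
                (Nat.pow_le_pow_left hWK _)) (le_refl _)
          _ = C * N^q := by rw [hC]; ring
      calc (#(goodT S (2*q)) : ℝ) ≤ ((C * N^q : ℕ) : ℝ) := by exact_mod_cast hnat
        _ = (C:ℝ) * Nr^q := by push_cast [hNr]; ring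
    calc (#(badS S) : ℝ) * (δ₁ * Nr)^(2*q) ≤ ∑ h ∈ badS S, (Bsum S h)^(2*q) := step1
      _ ≤ ∑ h : V → ZMod 2, (Bsum S h)^(2*q) := step2
      _ = (#(goodT S (2*q)) : ℝ) * 2^N := step3
      _ ≤ ((C:ℝ) * Nr^q) * 2^N := by
          refine mul_le_mul_of_nonneg_right step4 (by positivity)
      _ = (C:ℝ) * Nr^q * 2^N := by ring
  -- number of small S
  have hSScard : (#SS : ℝ) ≤ ((K:ℝ)+1) * Nr^K := by
    have hsub : SS ⊆ (Finset.range (K+1)).biUnion (fun r => Finset.powersetCard r univ) := by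
      intro S hS
      rw [hSS, mem_filter] at hS
      rw [Finset.mem_biUnion]
      exact ⟨#S, Finset.mem_range.mpr (Nat.lt_succ_of_le hS.2.2),
        Finset.mem_powersetCard.mpr ⟨subset_univ _, rfl⟩⟩
    have h1 : #SS ≤ ∑ r ∈ Finset.range (K+1), (#(Finset.powersetCard r (univ : Finset V))) :=
      le_trans (Finset.card_le_card hsub) (Finset.card_biUnion_le)
    have h2 : ∀ r ∈ Finset.range (K+1), #(Finset.powersetCard r (univ : Finset V)) ≤ N^K := by
      intro r hr
      rw [Finset.card_powersetCard, card_univ]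
      calc N.choose r ≤ N^r := Nat.choose_le_pow N r
        _ ≤ N^K := Nat.pow_le_pow_right hN1 (Nat.lt_succ_iff.mp (Finset.mem_range.mp hr))
    have h3 : #SS ≤ (K+1) * N^K := by
      calc #SS ≤ ∑ r ∈ Finset.range (K+1), (#(Finset.powersetCard r (univ : Finset V))) := h1
        _ ≤ ∑ _r ∈ Finset.range (K+1), N^K := Finset.sum_le_sum h2
        _ = (K+1) * N^K := by rw [Finset.sum_const, Finset.card_range, smul_eq_mul]
    calc (#SS : ℝ) ≤ (((K+1) * N^K : ℕ) : ℝ) := by exact_mod_cast h3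
      _ = ((K:ℝ)+1) * Nr^K := by push_cast [hNr]; ring
  -- union bound
  have hbadsub : bad ⊆ SS.biUnion badS := by
    intro h hh
    rw [hbad, mem_filter] at hh
    obtain ⟨-, S, hS1, hS2, hS3⟩ := hh
    rw [Finset.mem_biUnion]
    refine ⟨S, ?_, ?_⟩
    · rw [hSS, mem_filter]; exact ⟨mem_univ _, hS1, hS2⟩
    · rw [hbadS, mem_filter]; exact ⟨mem_univ _, hS3⟩
  have hpow0 : (0:ℝ) < (δ₁ * Nr)^(2*q) := by positivity
  have hbadcard : (#bad : ℝ) < 2^N := by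
    have h1 : (#bad : ℝ) ≤ ∑ S ∈ SS, (#(badS S) : ℝ) := by
      calc (#bad : ℝ) ≤ (#(SS.biUnion badS) : ℝ) := by
            exact_mod_cast Finset.card_le_card hbadsub
        _ ≤ ((∑ S ∈ SS, #(badS S) : ℕ) : ℝ) := by exact_mod_cast Finset.card_biUnion_le
        _ = ∑ S ∈ SS, (#(badS S) : ℝ) := by push_cast; ring
    have h2 : (#bad : ℝ) * (δ₁ * Nr)^(2*q) ≤ ((K:ℝ)+1) * Nr^K * ((C:ℝ) * Nr^q * 2^N) := by
      calc (#bad : ℝ) * (δ₁ * Nr)^(2*q) ≤ (∑ S ∈ SS, (#(badS S) : ℝ)) * (δ₁ * Nr)^(2*q) :=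
            mul_le_mul_of_nonneg_right h1 hpow0.le
        _ = ∑ S ∈ SS, (#(badS S) : ℝ) * (δ₁ * Nr)^(2*q) := by rw [Finset.sum_mul]
        _ ≤ ∑ _S ∈ SS, (C:ℝ) * Nr^q * 2^N := Finset.sum_le_sum key1
        _ = (#SS : ℝ) * ((C:ℝ) * Nr^q * 2^N) := by rw [Finset.sum_const, nsmul_eq_mul]
        _ ≤ ((K:ℝ)+1) * Nr^K * ((C:ℝ) * Nr^q * 2^N) := by
            refine mul_le_mul_of_nonneg_right hSScard (by positivity)
    have h3 : ((K:ℝ)+1) * Nr^K * ((C:ℝ) * Nr^q * 2^N) < (δ₁ * Nr)^(2*q) * 2^N := by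
      have hC' : (C : ℝ) = (2:ℝ)^(2*q) * ((K:ℝ)^4)^(2*q) * ((2*q : ℕ):ℝ)^(2*q) := by
        rw [hC]; push_cast; ring
      have := hbig
      calc ((K:ℝ)+1) * Nr^K * ((C:ℝ) * Nr^q * 2^N)
          = (((K:ℝ)+1) * ((2:ℝ)^(2*q) * ((K:ℝ)^4)^(2*q) * ((2*q : ℕ):ℝ)^(2*q)) * Nr^(K+q))
            * 2^N := by rw [hC']; rw [pow_add]; ring
        _ < (δ₁^(2*q) * Nr^(2*q)) * 2^N := by
            refine mul_lt_mul_of_pos_right ?_ (by positivity)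
            exact this
        _ = (δ₁ * Nr)^(2*q) * 2^N := by rw [mul_pow]
    have h4 : (#bad : ℝ) * (δ₁ * Nr)^(2*q) < 2^N * (δ₁ * Nr)^(2*q) := by
      calc (#bad : ℝ) * (δ₁ * Nr)^(2*q) ≤ ((K:ℝ)+1) * Nr^K * ((C:ℝ) * Nr^q * 2^N) := h2
        _ < (δ₁ * Nr)^(2*q) * 2^N := h3
        _ = 2^N * (δ₁ * Nr)^(2*q) := by ring
    exact lt_of_mul_lt_mul_right h4 hpow0.le
  -- extract a good h
  have hcard_univ : #(univ : Finset (V → ZMod 2)) = 2^N := by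
    rw [card_univ, Fintype.card_fun]
    norm_num [hN]
  have : #bad < #(univ : Finset (V → ZMod 2)) := by
    rw [hcard_univ]
    exact_mod_cast hbadcard
  have hssu : bad ⊂ univ := Finset.ssubset_univ_iff.mpr (fun heq => by
    rw [heq] at this; exact lt_irrefl _ this)
  obtain ⟨h, -, hh⟩ := Finset.exists_of_ssubset hssu
  refine ⟨h, ?_⟩
  intro S hS1 hS2
  by_contra hcon
  push_neg at hcon
  exact hh (by rw [hbad, mem_filter]; exact ⟨mem_univ _, S, hS1, hS2, hcon⟩)

-- ## Bridge lemmas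

lemma ite_eq_half (b : ZMod 2) : (if b = 0 then (1:ℝ) else 0) = (1 + sgn b)/2 := by
  rcases zmod2_cases b with hb | hb <;> simp [hb, sgn]

lemma count_inter (h : V → ZMod 2) (X : Finset V) :
    (#(univ.filter fun t => ∀ x ∈ X, h (t + x) = 0) : ℝ)
      = (1/2)^(#X) * ∑ S ∈ X.powerset, Bsum S h := by
  have hcard : (#(univ.filter fun t => ∀ x ∈ X, h (t + x) = 0) : ℝ)
      = ∑ t : V, (if (∀ x ∈ X, h (t + x) = 0) then (1:ℝ) else 0) := by
    rw [Finset.sum_ite, Finset.sum_const, Finset.sum_const]; simp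
  rw [hcard]
  have hper : ∀ t : V, (if (∀ x ∈ X, h (t + x) = 0) then (1:ℝ) else 0)
      = (1/2)^(#X) * ∏ x ∈ X, (1 + sgn (h (t + x))) := by
    intro t
    by_cases hall : ∀ x ∈ X, h (t + x) = 0
    · rw [if_pos hall]
      have : ∀ x ∈ X, (1 + sgn (h (t + x))) = 2 := by
        intro x hx; rw [hall x hx]; norm_num [sgn]
      rw [Finset.prod_congr rfl this, Finset.prod_const]
      rw [one_div, inv_pow, inv_mul_cancel₀ (by positivity)]
    · rw [if_neg hall]
      push_neg at hall
      obtain ⟨x, hx, hne⟩ := hall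
      have : (1 + sgn (h (t + x))) = 0 := by
        rcases zmod2_cases (h (t + x)) with hb | hb
        · exact absurd hb hne
        · rw [hb]; simp [sgn]
      rw [Finset.prod_eq_zero hx this, mul_zero]
  rw [Finset.sum_congr rfl (fun t _ => hper t), ← Finset.mul_sum]
  congr 1
  have hexp : ∀ t : V, ∏ x ∈ X, (1 + sgn (h (t + x)))
      = ∑ S ∈ X.powerset, ∏ x ∈ S, sgn (h (t + x)) := by
    intro t
    have : ∀ x ∈ X, (1 + sgn (h (t + x))) = (sgn (h (t + x)) + 1) := fun x _ => by ring
    rw [Finset.prod_congr rfl this, Finset.prod_add]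
    exact Finset.sum_congr rfl fun S _ => by rw [Finset.prod_const_one, mul_one]
  rw [Finset.sum_congr rfl (fun t _ => hexp t), Finset.sum_comm]
  exact Finset.sum_congr rfl fun S _ => rfl

lemma image_add_eq (h : V → ZMod 2) (s : V) :
    (univ.filter (fun t => h t = 0)).image (· + s) = univ.filter (fun t => h (t + s) = 0) := by
  ext t
  simp only [mem_image, mem_filter, mem_univ, true_and]
  constructor
  · rintro ⟨u, hu, rfl⟩
    rwa [show u + s + s = u by rw [add_assoc, char2, add_zero]]
  · intro ht
    exact ⟨t + s, ht, by rw [add_assoc, char2, add_zero]⟩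

lemma count_sect (h : V → ZMod 2) (U : Finset V) (s : V) :
    (#((univ.filter (fun t => h t = 0)).image (· + s) ∩ U) : ℝ)
      = ((#U : ℝ) + ∑ t ∈ U, sgn (h (t + s)))/2 := by
  rw [image_add_eq]
  have hint : univ.filter (fun t => h (t + s) = 0) ∩ U = U.filter (fun t => h (t + s) = 0) := by
    ext t; simp [and_comm]
  rw [hint]
  have : (#(U.filter (fun t => h (t + s) = 0)) : ℝ)
      = ∑ t ∈ U, (if h (t + s) = 0 then (1:ℝ) else 0) := by
    rw [Finset.sum_ite, Finset.sum_const, Finset.sum_const]; simp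
  rw [this, Finset.sum_congr rfl (fun t _ => ite_eq_half (h (t + s))), ← Finset.sum_div]
  rw [Finset.sum_add_distrib, Finset.sum_const, nsmul_eq_mul, mul_one]

lemma sq_sum_sect (h : V → ZMod 2) (U : Finset V) :
    ∑ s : V, (∑ t ∈ U, sgn (h (t + s)))^2
      = ∑ t ∈ U, ∑ t' ∈ U, ∑ u : V, sgn (h u) * sgn (h ((t + t') + u)) := by
  have hper : ∀ s : V, (∑ t ∈ U, sgn (h (t + s)))^2
      = ∑ t ∈ U, ∑ t' ∈ U, sgn (h (t + s)) * sgn (h (t' + s)) := by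
    intro s; rw [sq, Finset.sum_mul_sum]
  rw [Finset.sum_congr rfl (fun s _ => hper s)]
  rw [Finset.sum_comm]
  refine Finset.sum_congr rfl fun t _ => ?_
  rw [Finset.sum_comm]
  refine Finset.sum_congr rfl fun t' _ => ?_
  refine Fintype.sum_equiv (Equiv.addLeft t) _ _ ?_
  intro s
  have e2 : t + t' + (t + s) = t' + s := by
    rw [show t + t' + (t + s) = t' + s + (t + t) by abel, char2, add_zero]
  rw [show (Equiv.addLeft t) s = t + s from rfl]; rw [e2]

lemma A_eq_Bsum (h : V → ZMod 2) {d : V} (hd : d ≠ 0) :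
    ∑ u : V, sgn (h u) * sgn (h (d + u)) = Bsum {0, d} h := by
  rw [Bsum]
  refine Finset.sum_congr rfl fun u _ => ?_
  rw [Finset.prod_pair (Ne.symm hd)]
  rw [add_zero, add_comm u d]

lemma A_zero (h : V → ZMod 2) :
    ∑ u : V, sgn (h u) * sgn (h ((0:V) + u)) = (Fintype.card V : ℝ) := by
  have : ∀ u : V, sgn (h u) * sgn (h ((0:V) + u)) = 1 := by
    intro u
    rw [zero_add]
    rcases zmod2_cases (h u) with hb | hb <;> rw [hb] <;> norm_num [sgn]
  rw [Finset.sum_congr rfl (fun u _ => this u), Finset.sum_const, card_univ, nsmul_eq_mul, mul_one]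

/-- Theorem 2.1 of the paper: for every `k` and `ε, δ > 0` (with `ε ≤ 1`) there is `n`
such that for every finite `I` with `|I| > n` there is a partition `2^I = a⁰ ∪ a¹`
satisfying both the intersection condition (1) and the section condition (2). -/
theorem stmt4 (k : ℕ) (ε δ : ℝ) (hε : 0 < ε) (hε1 : ε ≤ 1) (hδ : 0 < δ) :
    ∃ n : ℕ, ∀ (I : Type) [Fintype I] [DecidableEq I], n < Fintype.card I →
      ∃ a0 a1 : Finset (I → ZMod 2),
        a0 ∪ a1 = Finset.univ ∧ Disjoint a0 a1 ∧
        (∀ X : Finset (I → ZMod 2), X.Nonempty → X.card ≤ k →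
          |((Finset.univ.filter
              (fun t => ∀ x ∈ X, t ∈ a0.image (· + x))).card : ℝ) / 2 ^ Fintype.card I
            - (1 / 2 : ℝ) ^ X.card| < δ) ∧
        (∀ (U : Finset (I → ZMod 2)) (a : ℝ),
          (U.card : ℝ) / 2 ^ Fintype.card I = a → ε ≤ a →
          ∃ T : Finset (I → ZMod 2), (T.card : ℝ) / 2 ^ Fintype.card I > 1 - δ ∧
            ∀ s ∈ T,
              |(((a0.image (· + s)) ∩ U).card : ℝ) / 2 ^ Fintype.card I - a / 2| < δ) := by
  set δ' : ℝ := min δ 1 with hδ'def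
  have hδ'0 : 0 < δ' := lt_min hδ one_pos
  have hδ'1 : δ' ≤ 1 := min_le_right _ _
  have hδ'δ : δ' ≤ δ := min_le_left _ _
  set δ₁ : ℝ := δ'^3/2 with hδ₁def
  have hδ₁0 : 0 < δ₁ := by positivity
  have hδ₁δ' : δ₁ < δ' := by
    have h3 : δ'^3 ≤ δ' := by
      calc δ'^3 = δ' * (δ' * δ') := by ring
        _ ≤ δ' * 1 := by
            refine mul_le_mul_of_nonneg_left ?_ hδ'0.le
            calc δ' * δ' ≤ 1 * 1 := mul_le_mul hδ'1 hδ'1 hδ'0.le one_pos.le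
              _ = 1 := by ring
        _ = δ' := by ring
    calc δ₁ = δ'^3/2 := rfl
      _ ≤ δ'/2 := by linarith
      _ < δ' := by linarith
  have hδ₁δ : δ₁ < δ := lt_of_lt_of_le hδ₁δ' hδ'δ
  set K : ℕ := max k 2 with hKdef
  set q : ℕ := K + 1 with hqdef
  set C' : ℝ := ((K:ℝ)+1) * ((2:ℝ)^(2*q) * ((K:ℝ)^4)^(2*q) * ((2*q : ℕ):ℝ)^(2*q)) with hC'def
  have hC'0 : 0 ≤ C' := by positivity
  set R : ℝ := max (C' / δ₁^(2*q)) (2/δ'^3) with hRdef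
  refine ⟨⌈R⌉₊, ?_⟩
  intro I _ _ hm
  set m := Fintype.card I with hmdef
  have hNnat : Fintype.card (I → ZMod 2) = 2^m := by
    rw [Fintype.card_fun]
    congr 1
  set Nr : ℝ := (Fintype.card (I → ZMod 2) : ℝ) with hNrdef
  have hNr2 : (2:ℝ)^m = Nr := by
    rw [hNrdef, hNnat]; push_cast; ring
  have hNr0 : (0:ℝ) < Nr := by rw [← hNr2]; positivity
  have hRNr : R < Nr := by
    calc R ≤ (⌈R⌉₊ : ℝ) := Nat.le_ceil R
      _ < ((2^(⌈R⌉₊) : ℕ) : ℝ) := by exact_mod_cast Nat.lt_two_pow_self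
      _ ≤ ((2^m : ℕ) : ℝ) := by
          exact_mod_cast Nat.pow_le_pow_right (by norm_num) hm.le
      _ = Nr := by rw [hNrdef, hNnat]
  have hR1 : C' < δ₁^(2*q) * Nr := by
    have h1 : C' / δ₁^(2*q) < Nr := lt_of_le_of_lt (le_max_left _ _) hRNr
    calc C' = (C' / δ₁^(2*q)) * δ₁^(2*q) := by field_simp
      _ < Nr * δ₁^(2*q) := by
          refine mul_lt_mul_of_pos_right h1 (by positivity)
      _ = δ₁^(2*q) * Nr := by ring
  have hR2 : (1:ℝ) < δ₁ * Nr := by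
    have h1 : 2/δ'^3 < Nr := lt_of_le_of_lt (le_max_right _ _) hRNr
    rw [hδ₁def]
    rw [div_lt_iff₀ (by positivity)] at h1
    calc (1:ℝ) < δ'^3 * Nr / 2 := by linarith
      _ = δ'^3/2 * Nr := by ring
  have hbig : ((K:ℝ)+1) * ((2:ℝ)^(2*q) * ((K:ℝ)^4)^(2*q) * ((2*q : ℕ):ℝ)^(2*q))
      * Nr^(K+q) < δ₁^(2*q) * Nr^(2*q) := by
    have hexp : 2*q = (K+q) + 1 := by omega
    calc ((K:ℝ)+1) * ((2:ℝ)^(2*q) * ((K:ℝ)^4)^(2*q) * ((2*q : ℕ):ℝ)^(2*q)) * Nr^(K+q)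
        = C' * Nr^(K+q) := by rw [hC'def]
      _ < (δ₁^(2*q) * Nr) * Nr^(K+q) := by
          refine mul_lt_mul_of_pos_right hR1 (by positivity)
      _ = δ₁^(2*q) * Nr^(2*q) := by rw [hexp, pow_succ]; ring
  obtain ⟨h, hgood⟩ := exists_uniform K q δ₁ hδ₁0 hbig
  set a0 : Finset (I → ZMod 2) := univ.filter (fun t => h t = 0) with ha0
  set a1 : Finset (I → ZMod 2) := univ.filter (fun t => ¬ h t = 0) with ha1
  refine ⟨a0, a1, Finset.filter_union_filter_not_eq _ _, Finset.disjoint_filter_filter_not _ _ _,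
    ?_, ?_⟩
  · -- condition (1)
    intro X hXne hXk
    have hpred : univ.filter (fun t => ∀ x ∈ X, t ∈ a0.image (· + x))
        = univ.filter (fun t => ∀ x ∈ X, h (t + x) = 0) := by
      refine Finset.filter_congr ?_
      intro t _
      constructor
      · intro hall x hx
        have := hall x hx
        rw [ha0, image_add_eq h x, mem_filter] at this
        exact this.2
      · intro hall x hx
        rw [ha0, image_add_eq h x, mem_filter]
        exact ⟨mem_univ _, hall x hx⟩
    rw [hpred, count_inter h X, hNr2]
    set r := #X with hr
    have hsplit : ∑ S ∈ X.powerset, Bsum S h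
        = Bsum ∅ h + ∑ S ∈ X.powerset.erase ∅, Bsum S h :=
      (Finset.add_sum_erase _ _ (Finset.empty_mem_powerset X)).symm
    have hBempty : Bsum (∅ : Finset (I → ZMod 2)) h = Nr := by
      rw [Bsum]
      simp [hNrdef]
    have habs : |∑ S ∈ X.powerset.erase ∅, Bsum S h|
        < (#(X.powerset.erase ∅) : ℝ) * (δ₁ * Nr) := by
      have hne : (X.powerset.erase ∅).Nonempty := by
        refine ⟨X, Finset.mem_erase.mpr ⟨?_, Finset.mem_powerset_self X⟩⟩
        exact Finset.nonempty_iff_ne_empty.mp hXne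
      calc |∑ S ∈ X.powerset.erase ∅, Bsum S h| ≤ ∑ S ∈ X.powerset.erase ∅, |Bsum S h| :=
            Finset.abs_sum_le_sum_abs _ _
        _ < ∑ _S ∈ X.powerset.erase ∅, δ₁ * Nr := by
            refine Finset.sum_lt_sum_of_nonempty hne ?_
            intro S hS
            rw [Finset.mem_erase] at hS
            refine hgood S (Finset.nonempty_iff_ne_empty.mpr hS.1) ?_
            calc #S ≤ #X := Finset.card_le_card (Finset.mem_powerset.mp hS.2)
              _ ≤ k := hXk
              _ ≤ K := le_max_left _ _
        _ = (#(X.powerset.erase ∅) : ℝ) * (δ₁ * Nr) := by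
            rw [Finset.sum_const, nsmul_eq_mul]
    have hcard_er : (#(X.powerset.erase ∅) : ℝ) ≤ 2^r := by
      calc (#(X.powerset.erase ∅) : ℝ) ≤ (#(X.powerset) : ℝ) := by
            exact_mod_cast Finset.card_le_card (Finset.erase_subset _ _)
        _ = 2^r := by rw [Finset.card_powerset, hr]; push_cast; ring
    have hkey : (1/2:ℝ)^r * (Nr + ∑ S ∈ X.powerset.erase ∅, Bsum S h) / Nr - (1/2)^r
        = (1/2)^r * (∑ S ∈ X.powerset.erase ∅, Bsum S h) / Nr := by
      field_simp
      ring
    rw [hsplit, hBempty, hkey]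
    rw [abs_div, abs_mul, abs_of_nonneg (by positivity : (0:ℝ) ≤ (1/2:ℝ)^r),
      abs_of_nonneg hNr0.le]
    calc (1/2:ℝ)^r * |∑ S ∈ X.powerset.erase ∅, Bsum S h| / Nr
        < (1/2:ℝ)^r * ((#(X.powerset.erase ∅) : ℝ) * (δ₁ * Nr)) / Nr := by
          gcongr
      _ ≤ δ₁ := by
          have hE1 : (1/2:ℝ)^r * (#(X.powerset.erase ∅) : ℝ) ≤ 1 := by
            calc (1/2:ℝ)^r * (#(X.powerset.erase ∅) : ℝ) ≤ (1/2:ℝ)^r * 2^r :=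
                  mul_le_mul_of_nonneg_left hcard_er (by positivity)
              _ = 1 := by rw [← mul_pow]; norm_num
          have heq : (1/2:ℝ)^r * ((#(X.powerset.erase ∅) : ℝ) * (δ₁ * Nr)) / Nr
              = ((1/2:ℝ)^r * (#(X.powerset.erase ∅) : ℝ)) * δ₁ := by
            field_simp
          rw [heq]
          calc ((1/2:ℝ)^r * (#(X.powerset.erase ∅) : ℝ)) * δ₁ ≤ 1 * δ₁ :=
                mul_le_mul_of_nonneg_right hE1 hδ₁0.le
            _ = δ₁ := by ring
      _ < δ := hδ₁δ
  · -- condition (2)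
    intro U a hUa hεa
    set G : (I → ZMod 2) → ℝ := fun s => ∑ t ∈ U, sgn (h (t + s)) with hG
    set T : Finset (I → ZMod 2) := univ.filter (fun s => |G s| < δ * Nr) with hT
    have hUN : (#U : ℝ) ≤ Nr := by
      rw [hNrdef]
      exact_mod_cast Finset.card_le_univ U
    have hsq : ∑ s : I → ZMod 2, (G s)^2 < δ^3 * Nr^3 := by
      have hGs : ∀ s, G s = ∑ t ∈ U, sgn (h (t + s)) := fun s => rfl
      have : ∑ s : I → ZMod 2, (G s)^2
          = ∑ t ∈ U, ∑ t' ∈ U, ∑ u : I → ZMod 2, sgn (h u) * sgn (h ((t + t') + u)) := by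
        rw [show (∑ s : I → ZMod 2, (G s)^2)
            = ∑ s : I → ZMod 2, (∑ t ∈ U, sgn (h (t + s)))^2 from rfl]
        exact sq_sum_sect h U
      rw [this]
      have hper : ∀ t ∈ U, ∑ t' ∈ U, (∑ u : I → ZMod 2, sgn (h u) * sgn (h ((t + t') + u)))
          ≤ Nr + (#U : ℝ) * (δ₁ * Nr) := by
        intro t ht
        rw [← Finset.add_sum_erase _ _ ht]
        have hdiag : ∑ u : I → ZMod 2, sgn (h u) * sgn (h ((t + t) + u)) = Nr := by
          rw [char2]
          exact A_zero h
        have hoff : ∑ t' ∈ U.erase t, (∑ u : I → ZMod 2, sgn (h u) * sgn (h ((t + t') + u)))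
            ≤ (#U : ℝ) * (δ₁ * Nr) := by
          have hbound : ∀ t' ∈ U.erase t,
              (∑ u : I → ZMod 2, sgn (h u) * sgn (h ((t + t') + u))) ≤ δ₁ * Nr := by
            intro t' ht'
            have hne : t + t' ≠ 0 := by
              intro hzero
              have h2 : t + (t + t') = t' := char2_cancel
              rw [hzero, add_zero] at h2
              exact (Finset.mem_erase.mp ht').1 h2.symm
            rw [A_eq_Bsum h hne]
            have hcard2 : #({(0 : I → ZMod 2), t + t'} : Finset (I → ZMod 2)) ≤ K := by
              rw [Finset.card_pair (Ne.symm hne)]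
              exact le_max_right k 2
            have := hgood {0, t + t'} ⟨0, Finset.mem_insert_self _ _⟩ hcard2
            calc Bsum {0, t + t'} h ≤ |Bsum {0, t + t'} h| := le_abs_self _
              _ ≤ δ₁ * Nr := this.le
          calc ∑ t' ∈ U.erase t, (∑ u : I → ZMod 2, sgn (h u) * sgn (h ((t + t') + u)))
              ≤ ∑ _t' ∈ U.erase t, δ₁ * Nr := Finset.sum_le_sum hbound
            _ = (#(U.erase t) : ℝ) * (δ₁ * Nr) := by rw [Finset.sum_const, nsmul_eq_mul]
            _ ≤ (#U : ℝ) * (δ₁ * Nr) := by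
                refine mul_le_mul_of_nonneg_right ?_ (by positivity)
                exact_mod_cast Finset.card_le_card (Finset.erase_subset _ _)
        rw [hdiag]
        linarith [hoff]
      calc ∑ t ∈ U, ∑ t' ∈ U, ∑ u : I → ZMod 2, sgn (h u) * sgn (h ((t + t') + u))
          ≤ ∑ _t ∈ U, (Nr + (#U : ℝ) * (δ₁ * Nr)) := Finset.sum_le_sum hper
        _ = (#U : ℝ) * (Nr + (#U : ℝ) * (δ₁ * Nr)) := by rw [Finset.sum_const, nsmul_eq_mul]
        _ ≤ Nr * (Nr + Nr * (δ₁ * Nr)) := by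
            refine mul_le_mul hUN ?_ ?_ hNr0.le
            · refine add_le_add (le_refl _) (mul_le_mul_of_nonneg_right hUN (by positivity))
            · positivity
        _ = Nr^2 + δ₁ * Nr^3 := by ring
        _ < δ₁ * Nr^3 + δ₁ * Nr^3 := by
            have : Nr^2 * 1 < Nr^2 * (δ₁ * Nr) := by
              refine mul_lt_mul_of_pos_left hR2 (by positivity)
            nlinarith [this]
        _ = δ'^3 * Nr^3 := by rw [hδ₁def]; ring
        _ ≤ δ^3 * Nr^3 := by
            refine mul_le_mul_of_nonneg_right ?_ (by positivity)
            exact pow_le_pow_left₀ hδ'0.le hδ'δ 3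
    set Tc : Finset (I → ZMod 2) := univ.filter (fun s => ¬ |G s| < δ * Nr) with hTc
    have hTcbound : (#Tc : ℝ) < δ * Nr := by
      have hlow : (#Tc : ℝ) * (δ * Nr)^2 ≤ ∑ s ∈ Tc, (G s)^2 := by
        have : ∀ s ∈ Tc, (δ * Nr)^2 ≤ (G s)^2 := by
          intro s hs
          rw [hTc, mem_filter] at hs
          have h1 : δ * Nr ≤ |G s| := not_lt.mp hs.2
          calc (δ * Nr)^2 ≤ |G s|^2 := by
                refine pow_le_pow_left₀ (by positivity) h1 2
            _ = (G s)^2 := sq_abs _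
        calc (#Tc : ℝ) * (δ * Nr)^2 = ∑ _s ∈ Tc, (δ * Nr)^2 := by
              rw [Finset.sum_const, nsmul_eq_mul]
          _ ≤ ∑ s ∈ Tc, (G s)^2 := Finset.sum_le_sum this
      have hup : ∑ s ∈ Tc, (G s)^2 ≤ ∑ s : I → ZMod 2, (G s)^2 :=
        Finset.sum_le_sum_of_subset_of_nonneg (subset_univ _) (fun s _ _ => sq_nonneg _)
      have hcomb : (#Tc : ℝ) * (δ * Nr)^2 < (δ * Nr) * (δ * Nr)^2 := by
        calc (#Tc : ℝ) * (δ * Nr)^2 ≤ ∑ s ∈ Tc, (G s)^2 := hlow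
          _ ≤ ∑ s : I → ZMod 2, (G s)^2 := hup
          _ < δ^3 * Nr^3 := hsq
          _ = (δ * Nr) * (δ * Nr)^2 := by ring
      exact lt_of_mul_lt_mul_right hcomb (by positivity)
    have hTT : (#T : ℝ) + (#Tc : ℝ) = Nr := by
      have := Finset.card_filter_add_card_filter_not
        (s := (univ : Finset (I → ZMod 2))) (p := fun s => |G s| < δ * Nr)
      rw [card_univ] at this
      rw [hT, hTc, hNrdef]
      exact_mod_cast this
    refine ⟨T, ?_, ?_⟩
    · rw [hNr2, gt_iff_lt, ← sub_pos]
      have : (#T : ℝ) / Nr - (1 - δ) = ((#T : ℝ) - (1 - δ) * Nr) / Nr := by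
        field_simp
      rw [this]
      refine div_pos ?_ hNr0
      nlinarith [hTcbound, hTT]
    · intro s hs
      rw [hT, mem_filter] at hs
      have hGs : |G s| < δ * Nr := hs.2
      rw [ha0, count_sect h U s, hNr2]
      have ha' : (#U : ℝ) = a * Nr := by
        rw [← hUa, hNr2]
        field_simp
      have heq : ((#U : ℝ) + G s) / 2 / Nr - a / 2 = G s / (2 * Nr) := by
        rw [ha']
        field_simp
        ring
      rw [heq, abs_div, abs_of_nonneg (by positivity : (0:ℝ) ≤ 2 * Nr)]
      rw [div_lt_iff₀ (by positivity)]
      calc |G s| < δ * Nr := hGs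
        _ ≤ δ * (2 * Nr) := by nlinarith [hNr0]
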